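/- Let α be an algebraic number with 0 < α < 1 such that N₀[α] is atomic. Then the omega-primality of the monoid N₀[α] is infinite. -/

import Mathlib

/-- `N₀[α]`: the additive submonoid of ℝ generated by the powers of `α`. -/
def Nmon (α : ℝ) : AddSubmonoid ℝ := AddSubmonoid.closure (Set.range fun n : ℕ => α ^ n)

/-- `a` is an atom of the submonoid `M`. -/
def IsAtomOf (M : AddSubmonoid ℝ) (a : ℝ) : Prop :=
  a ∈ M ∧ a ≠ 0 ∧ ∀ b c : ℝ, b ∈ M → c ∈ M → a = b + c → b = 0 ∨ c = 0

/-- `M` is atomic: every nonzero element is a sum of atoms. -/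
def IsAtomicM (M : AddSubmonoid ℝ) : Prop :=
  ∀ x ∈ M, x ≠ 0 → ∃ S : Multiset ℝ, (∀ a ∈ S, IsAtomOf M a) ∧ S.sum = x

/-- Divisibility in the submonoid `M`. -/
def DvdM (M : AddSubmonoid ℝ) (x y : ℝ) : Prop := ∃ z ∈ M, y = x + z

namespace Stmt3Aux

open Polynomial

lemma pow_mem (α : ℝ) (n : ℕ) : α ^ n ∈ Nmon α :=
  AddSubmonoid.subset_closure ⟨n, rfl⟩

lemma mem_nonneg {α : ℝ} (h0 : 0 < α) {x : ℝ} (hx : x ∈ Nmon α) : 0 ≤ x := by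
  have h : Nmon α ≤ AddSubmonoid.nonneg ℝ :=
    AddSubmonoid.closure_le.2 (by rintro _ ⟨n, rfl⟩; exact pow_nonneg h0.le n)
  exact h hx

lemma nat_mul_pow_mem (α : ℝ) (n m : ℕ) : (n : ℝ) * α ^ m ∈ Nmon α := by
  simpa [nsmul_eq_mul] using nsmul_mem (pow_mem α m) n

lemma atom_eq_pow {α : ℝ} (h0 : 0 < α) {a : ℝ} (ha : IsAtomOf (Nmon α) a) :
    ∃ i : ℕ, a = α ^ i := by
  obtain ⟨hm, hne, hsplit⟩ := ha
  obtain ⟨l, hl, hsum⟩ := AddSubmonoid.exists_multiset_of_mem_closure hm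
  by_cases hl0 : l = 0
  · subst hl0; simp at hsum; exact absurd hsum.symm hne
  obtain ⟨x, hx⟩ := Multiset.exists_mem_of_ne_zero hl0
  obtain ⟨l', rfl⟩ := Multiset.exists_cons_of_mem hx
  obtain ⟨i, rfl⟩ := hl x (Multiset.mem_cons_self _ _)
  have hl'mem : l'.sum ∈ Nmon α := by
    refine multiset_sum_mem l' ?_
    intro y hy
    obtain ⟨j, rfl⟩ := hl y (Multiset.mem_cons_of_mem hy)
    exact pow_mem α j
  rw [Multiset.sum_cons] at hsum
  rcases hsplit (α ^ i) l'.sum (pow_mem α i) hl'mem hsum.symm with h | h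
  · exact absurd h (pow_ne_zero i h0.ne')
  · exact ⟨i, by rw [← hsum, h, add_zero]⟩

lemma strip {α : ℝ} (hα : α ≠ 0) :
    ∀ N : ℕ, ∀ g : ℤ[X], g.natDegree ≤ N → g ≠ 0 → Polynomial.aeval α g = 0 →
      ∃ h : ℤ[X], h ≠ 0 ∧ Polynomial.aeval α h = 0 ∧ h.coeff 0 ≠ 0 := by
  intro N
  induction N with
  | zero =>
    intro g hdeg hg hga
    refine ⟨g, hg, hga, ?_⟩
    intro hc0
    apply hg
    have : g = Polynomial.C (g.coeff 0) := (Polynomial.eq_C_of_natDegree_eq_zero (Nat.le_zero.mp hdeg))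
    rw [this, hc0, map_zero]
  | succ N IH =>
    intro g hdeg hg hga
    by_cases hc0 : g.coeff 0 = 0
    · obtain ⟨h, rfl⟩ := Polynomial.X_dvd_iff.mpr hc0
      have hh : h ≠ 0 := by rintro rfl; simp at hg
      have hdeg' : h.natDegree ≤ N := by
        have := Polynomial.natDegree_X_mul hh
        omega
      have hha : Polynomial.aeval α h = 0 := by
        rw [map_mul, Polynomial.aeval_X] at hga
        rcases mul_eq_zero.mp hga with h' | h'
        · exact absurd h' hα
        · exact h'
      exact IH h hdeg' hh hha
    · exact ⟨g, hg, hga, hc0⟩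

lemma exists_relation {α : ℝ} (halg : IsAlgebraic ℚ α) (h0 : 0 < α) :
    ∃ (D c : ℕ) (p q : ℕ → ℕ), 1 ≤ c ∧
      (c : ℝ) + ∑ t ∈ Finset.range D, (p t : ℝ) * α ^ (t + 1)
        = ∑ t ∈ Finset.range D, (q t : ℝ) * α ^ (t + 1) := by
  have halgZ : IsAlgebraic ℤ α := (IsFractionRing.isAlgebraic_iff ℤ ℚ ℝ).mpr halg
  obtain ⟨g, hg, hga⟩ := halgZ
  obtain ⟨h, hh, hha, hc0⟩ := strip h0.ne' g.natDegree g rfl.le hg hga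
  -- make the constant coefficient negative
  obtain ⟨h, hh, hha, hc0⟩ : ∃ h : ℤ[X], h ≠ 0 ∧ Polynomial.aeval α h = 0 ∧ h.coeff 0 < 0 := by
    rcases lt_or_gt_of_ne hc0 with hlt | hgt
    · exact ⟨h, hh, hha, hlt⟩
    · exact ⟨-h, neg_ne_zero.mpr hh, by rw [map_neg, hha, neg_zero], by simpa using hgt⟩
  set D := h.natDegree with hD
  refine ⟨D, (-(h.coeff 0)).toNat, fun t => (-(h.coeff (t + 1))).toNat,
    fun t => (h.coeff (t + 1)).toNat, by omega, ?_⟩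
  have hsum : (0 : ℝ) = ∑ i ∈ Finset.range (D + 1), (h.coeff i : ℝ) * α ^ i := by
    have := Polynomial.aeval_eq_sum_range (R := ℤ) (p := h) α
    rw [hha] at this
    rw [this]
    apply Finset.sum_congr rfl
    intro i _
    rw [zsmul_eq_mul]
  rw [Finset.sum_range_succ'] at hsum
  have key : ∀ z : ℤ, ((z.toNat : ℝ) : ℝ) - (((-z).toNat : ℝ)) = (z : ℝ) := by
    intro z
    have : (z.toNat : ℤ) - ((-z).toNat : ℤ) = z := by omega
    exact_mod_cast congrArg (Int.cast : ℤ → ℝ) this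
  have hc : (((-(h.coeff 0)).toNat : ℝ)) = -(h.coeff 0 : ℝ) := by
    have : ((-(h.coeff 0)).toNat : ℤ) = -(h.coeff 0) := by omega
    exact_mod_cast congrArg (Int.cast : ℤ → ℝ) this
  rw [hc]
  rw [← sub_eq_zero]
  have expand : ∀ t ∈ Finset.range D,
      ((-(h.coeff (t + 1))).toNat : ℝ) * α ^ (t + 1) - ((h.coeff (t + 1)).toNat : ℝ) * α ^ (t + 1)
        = -((h.coeff (t + 1) : ℝ) * α ^ (t + 1)) := by
    intro t _
    have := key (h.coeff (t + 1))
    linear_combination (-(α ^ (t + 1))) * this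
  have : (-(h.coeff 0 : ℝ)) + ∑ t ∈ Finset.range D, ((-(h.coeff (t+1))).toNat : ℝ) * α ^ (t+1)
      - ∑ t ∈ Finset.range D, ((h.coeff (t+1)).toNat : ℝ) * α ^ (t+1)
      = -(∑ t ∈ Finset.range D, (h.coeff (t+1) : ℝ) * α ^ (t+1) + (h.coeff 0 : ℝ) * α ^ 0) := by
    rw [add_sub_assoc, ← Finset.sum_sub_distrib, Finset.sum_congr rfl expand, Finset.sum_neg_distrib]
    simp only [pow_zero, mul_one]
    ring
  rw [this, ← hsum, neg_zero]

/-- The additive monoid hom sending a multiset of exponents to the sum of the powers. -/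
def powSum (α : ℝ) : Multiset ℕ →+ ℝ where
  toFun T := (T.map fun t => α ^ t).sum
  map_zero' := rfl
  map_add' a b := by simp [Multiset.map_add]

lemma push {α : ℝ} (h0 : 0 < α) (D c : ℕ) (p q : ℕ → ℕ) (hc : 1 ≤ c)
    (hrel : (c : ℝ) + ∑ t ∈ Finset.range D, (p t : ℝ) * α ^ (t + 1)
      = ∑ t ∈ Finset.range D, (q t : ℝ) * α ^ (t + 1)) :
    ∀ r j : ℕ, ∃ T : Multiset ℕ, (∀ t ∈ T, j + r ≤ t) ∧
      ∃ z ∈ Nmon α, powSum α T = (c : ℝ) ^ r * α ^ j + z := by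
  intro r
  induction r with
  | zero =>
    intro j
    exact ⟨{j}, by simp, 0, zero_mem _, by show (Multiset.map (fun t => α ^ t) {j}).sum = (c : ℝ) ^ 0 * α ^ j + 0; simp⟩
  | succ r IH =>
    intro j
    choose T hT z hz hsum using IH
    refine ⟨∑ t ∈ Finset.range D, q t • T (j + t + 1), ?_, ?_⟩
    · intro t ht
      rw [Multiset.mem_sum] at ht
      obtain ⟨s, hs, hts⟩ := ht
      have := hT (j + s + 1) t (Multiset.mem_of_mem_nsmul hts)
      omega
    · refine ⟨(∑ t ∈ Finset.range D, ((c ^ r * p t : ℕ) : ℝ) * α ^ (t + 1 + j))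
        + ∑ t ∈ Finset.range D, (q t : ℝ) * z (j + t + 1), ?_, ?_⟩
      · refine add_mem (sum_mem ?_) (sum_mem ?_)
        · intro t _; exact nat_mul_pow_mem α _ _
        · intro t _
          simpa [nsmul_eq_mul] using nsmul_mem (hz (j + t + 1)) (q t)
      · rw [map_sum]
        have hterm : ∀ t ∈ Finset.range D,
            powSum α (q t • T (j + t + 1))
              = (c : ℝ) ^ r * α ^ j * ((q t : ℝ) * α ^ (t + 1))
                + (q t : ℝ) * z (j + t + 1) := by
          intro t _
          rw [AddMonoidHom.map_nsmul, hsum (j + t + 1), nsmul_eq_mul]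
          have : α ^ (j + t + 1) = α ^ j * α ^ (t + 1) := by
            rw [← pow_add]; ring_nf
          rw [this]; ring
        rw [Finset.sum_congr rfl hterm, Finset.sum_add_distrib, ← Finset.mul_sum, ← hrel]
        have : ∀ t ∈ Finset.range D,
            ((c ^ r * p t : ℕ) : ℝ) * α ^ (t + 1 + j)
              = (c : ℝ) ^ r * α ^ j * ((p t : ℝ) * α ^ (t + 1)) := by
          intro t _
          have : α ^ (t + 1 + j) = α ^ j * α ^ (t + 1) := by
            rw [← pow_add]; ring_nf
          push_cast
          rw [this]; ring
        rw [Finset.sum_congr rfl this, ← Finset.mul_sum]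
        rw [pow_succ]
        ring

end Stmt3Aux

open Stmt3Aux in
/-- For an algebraic `α` with `0 < α < 1` and `N₀[α]` atomic, the omega-primality of
`N₀[α]` is infinite: for every `n` there is an atom `a` and a sum of atoms divisible by `a`
such that no subsum of at most `n` of them is divisible by `a`. -/
theorem stmt3 (α : ℝ) (halg : IsAlgebraic ℚ α) (h0 : 0 < α) (h1 : α < 1)
    (hat : IsAtomicM (Nmon α)) :
    ∀ n : ℕ, ∃ a : ℝ, IsAtomOf (Nmon α) a ∧
      ∃ T : Multiset ℝ, (∀ b ∈ T, IsAtomOf (Nmon α) b) ∧ DvdM (Nmon α) a T.sum ∧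
        ∀ S ≤ T, Multiset.card S ≤ n → ¬ DvdM (Nmon α) a S.sum := by
  intro n
  -- find an atom
  have h1mem : (1 : ℝ) ∈ Nmon α := by simpa using pow_mem α 0
  obtain ⟨S1, hS1a, hS1s⟩ := hat 1 h1mem one_ne_zero
  have hS1ne : S1 ≠ 0 := by rintro rfl; simp at hS1s
  obtain ⟨a, haS⟩ := Multiset.exists_mem_of_ne_zero hS1ne
  have ha : IsAtomOf (Nmon α) a := hS1a a haS
  obtain ⟨i, rfl⟩ := atom_eq_pow h0 ha
  obtain ⟨D, c, p, q, hc, hrel⟩ := exists_relation halg h0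
  obtain ⟨r, hr⟩ := exists_pow_lt_of_lt_one (x := 1 / ((n : ℝ) + 1)) (by positivity) h1
  obtain ⟨T₀, hT₀, z, hz, hsum⟩ := push h0 D c p q hc hrel r i
  have hdec : ∀ t : ℕ, ∃ S : Multiset ℝ, (∀ b ∈ S, IsAtomOf (Nmon α) b) ∧ S.sum = α ^ t :=
    fun t => hat _ (pow_mem α t) (pow_ne_zero t h0.ne')
  choose g hg1 hg2 using hdec
  refine ⟨α ^ i, ha, T₀.bind g, ?_, ?_, ?_⟩
  · intro b hb
    rw [Multiset.mem_bind] at hb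
    obtain ⟨t, _, hbt⟩ := hb
    exact hg1 t b hbt
  · have hTsum : (T₀.bind g).sum = (c : ℝ) ^ r * α ^ i + z := by
      rw [Multiset.sum_bind]
      have : T₀.map (fun t => (g t).sum) = T₀.map (fun t => α ^ t) :=
        Multiset.map_congr rfl (fun t _ => hg2 t)
      rw [this]
      exact hsum
    refine ⟨((c ^ r - 1 : ℕ) : ℝ) * α ^ i + z, add_mem (nat_mul_pow_mem α _ _) hz, ?_⟩
    rw [hTsum]
    have hcr : 1 ≤ c ^ r := Nat.one_le_pow r c (by omega)
    have : ((c ^ r - 1 : ℕ) : ℝ) = (c : ℝ) ^ r - 1 := by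
      push_cast [Nat.cast_sub hcr]
      ring
    rw [this]
    ring
  · intro S hST hcard hdvd
    obtain ⟨w, hw, hsw⟩ := hdvd
    have hwnn := mem_nonneg h0 hw
    have hub : ∀ b ∈ S, b ≤ α ^ (i + r) := by
      intro b hb
      have hbT := Multiset.mem_of_le hST hb
      rw [Multiset.mem_bind] at hbT
      obtain ⟨t, htT, hbg⟩ := hbT
      have hle : b ≤ (g t).sum :=
        Multiset.single_le_sum (fun x hx => mem_nonneg h0 (hg1 t x hx).1) b hbg
      rw [hg2 t] at hle
      exact hle.trans (pow_le_pow_of_le_one h0.le h1.le (hT₀ t htT))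
    have hSsum : S.sum ≤ (Multiset.card S) • α ^ (i + r) :=
      Multiset.sum_le_card_nsmul S _ hub
    have hlt : S.sum < α ^ i := by
      have hna : (n : ℝ) * α ^ r < 1 := by
        have h3 : α ^ r * ((n : ℝ) + 1) < 1 := by
          have := (lt_div_iff₀ (by positivity : (0:ℝ) < (n : ℝ) + 1)).mp hr
          linarith
        nlinarith [pow_nonneg h0.le r]
      calc S.sum ≤ (Multiset.card S) • α ^ (i + r) := hSsum
        _ ≤ (n : ℝ) * α ^ (i + r) := by
            rw [nsmul_eq_mul]
            exact mul_le_mul_of_nonneg_right (by exact_mod_cast hcard) (pow_nonneg h0.le _)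
        _ = ((n : ℝ) * α ^ r) * α ^ i := by rw [pow_add]; ring
        _ < 1 * α ^ i := mul_lt_mul_of_pos_right hna (pow_pos h0 i)
        _ = α ^ i := one_mul _
    rw [hsw] at hlt
    linarith
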